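/- Let k be an algebraically closed field of characteristic ≠ 2. There exist elements s, t in the ring k[x][[y]] (power series in y with polynomial coefficients in x) such that x - s² = (y² - x(x²-1))·t. -/

import Mathlib

namespace EllAux

open Polynomial Finset

variable {k : Type*} [Field k]

/-- Degree ≤ 2 polynomial with prescribed values at 0, 1, -1. -/
noncomputable def interp (v0 v1 vm1 : k) : k[X] :=
  C v0 + C ((v1 - vm1) / 2) * X + C ((v1 + vm1) / 2 - v0) * X ^ 2

/-- The cubic x³ - x. -/
noncomputable def cpol (k : Type*) [Field k] : k[X] := X ^ 3 - X

/-- value at 0 of the N-th `S` polynomial, from the prefix data. -/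
noncomputable def v0g (i : k) (S T : ℕ → k[X]) (N : ℕ) : k :=
  -(eval 0 (T (N - 1)) + ∑ j ∈ Finset.Ico 2 N, eval 0 (S j) * eval 0 (S (N + 1 - j))) / (2 * i)

noncomputable def v1g (S T : ℕ → k[X]) (N : ℕ) : k :=
  -((∑ j ∈ Finset.Ico 1 N, eval 1 (S j) * eval 1 (S (N - j))) + eval 1 (T (N - 2))) / 2

noncomputable def vm1g (i : k) (S T : ℕ → k[X]) (N : ℕ) : k :=
  -((∑ j ∈ Finset.Ico 1 N, eval (-1) (S j) * eval (-1) (S (N - j))) + eval (-1) (T (N - 2))) /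
    (2 * i)

/-- `pre i N m` : the pair (Sₘ, Tₘ) of the recursive construction, computed with
recursion depth `N ≥ m`. -/
noncomputable def pre (i : k) : ℕ → ℕ → k[X] × k[X]
  | 0, _ => (C ((1 - i) / 2) * X + C ((1 + i) / 2) * X ^ 2,
             C 1 + C (((1 + i) / 2) ^ 2) * X)
  | 1, m =>
      if m = 0 then
        (C ((1 - i) / 2) * X + C ((1 + i) / 2) * X ^ 2,
         C 1 + C (((1 + i) / 2) ^ 2) * X)
      else
        (C i * (1 - X ^ 2),
         C (-(2 * i) * ((1 - i) / 2)) + C (-(2 * i) * ((1 + i) / 2)) * X)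
  | (n + 2), m =>
      if m < n + 2 then pre i (n + 1) m
      else
        let S : ℕ → k[X] := fun j => (pre i (n + 1) j).1
        let T : ℕ → k[X] := fun j => (pre i (n + 1) j).2
        let Snew := interp (v0g i S T (n + 2)) (v1g S T (n + 2)) (vm1g i S T (n + 2))
        (Snew,
          (2 * S 0 * Snew + (∑ j ∈ Finset.Ico 1 (n + 2), S j * S (n + 2 - j)) + T n) /ₘ cpol k)

noncomputable def SS (i : k) (n : ℕ) : k[X] := (pre i n n).1

noncomputable def TT (i : k) (n : ℕ) : k[X] := (pre i n n).2

lemma pre_agree (i : k) : ∀ N m, m ≤ N → pre i N m = pre i m m := by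
  intro N
  induction N with
  | zero =>
      intro m hm
      have : m = 0 := by omega
      subst this; rfl
  | succ n ih =>
      intro m hm
      rcases Nat.lt_or_ge m (n + 1) with h | h
      · have h' : m ≤ n := by omega
        have : pre i (n + 1) m = pre i n m := by
          match n with
          | 0 => have : m = 0 := by omega
                 subst this; simp [pre]
          | Nat.succ n' =>
                 show pre i (n' + 2) m = _
                 rw [pre]
                 simp [h]
        rw [this, ih m h']
      · have : m = n + 1 := by omega
        subst this; rfl

lemma SS_zero (i : k) : SS i 0 = C ((1 - i) / 2) * X + C ((1 + i) / 2) * X ^ 2 := rfl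

lemma SS_one (i : k) : SS i 1 = C i * (1 - X ^ 2) := by
  show (pre i 1 1).1 = _
  rw [pre]; norm_num

lemma TT_zero (i : k) : TT i 0 = C 1 + C (((1 + i) / 2) ^ 2) * X := rfl

lemma TT_one (i : k) :
    TT i 1 = C (-(2 * i) * ((1 - i) / 2)) + C (-(2 * i) * ((1 + i) / 2)) * X := by
  show (pre i 1 1).2 = _
  rw [pre]; norm_num

lemma prefix_S (i : k) (n : ℕ) {j : ℕ} (hj : j ≤ n + 1) :
    (pre i (n + 1) j).1 = SS i j := by rw [pre_agree i (n + 1) j hj]; rfl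

lemma prefix_T (i : k) (n : ℕ) {j : ℕ} (hj : j ≤ n + 1) :
    (pre i (n + 1) j).2 = TT i j := by rw [pre_agree i (n + 1) j hj]; rfl

lemma pre_unfold (i : k) (n : ℕ) :
    pre i (n + 2) (n + 2) =
      (interp (v0g i (SS i) (TT i) (n + 2)) (v1g (SS i) (TT i) (n + 2))
          (vm1g i (SS i) (TT i) (n + 2)),
       (2 * SS i 0 *
            interp (v0g i (SS i) (TT i) (n + 2)) (v1g (SS i) (TT i) (n + 2))
              (vm1g i (SS i) (TT i) (n + 2)) +
          (∑ j ∈ Finset.Ico 1 (n + 2), SS i j * SS i (n + 2 - j)) + TT i n) /ₘ cpol k) := by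
  have hS1 : ∀ z : k, ∑ j ∈ Finset.Ico 1 (n + 2),
      eval z ((pre i (n + 1) j).1) * eval z ((pre i (n + 1) (n + 2 - j)).1)
      = ∑ j ∈ Finset.Ico 1 (n + 2), eval z (SS i j) * eval z (SS i (n + 2 - j)) := by
    intro z
    refine Finset.sum_congr rfl fun j hj => ?_
    rw [mem_Ico] at hj
    rw [prefix_S i n (by omega), prefix_S i n (by omega)]
  have hS2 : ∑ j ∈ Finset.Ico 2 (n + 2),
      eval 0 ((pre i (n + 1) j).1) * eval 0 ((pre i (n + 1) (n + 2 + 1 - j)).1)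
      = ∑ j ∈ Finset.Ico 2 (n + 2), eval 0 (SS i j) * eval 0 (SS i (n + 2 + 1 - j)) := by
    refine Finset.sum_congr rfl fun j hj => ?_
    rw [mem_Ico] at hj
    rw [prefix_S i n (by omega), prefix_S i n (by omega)]
  have hSpoly : ∑ j ∈ Finset.Ico 1 (n + 2),
      (pre i (n + 1) j).1 * (pre i (n + 1) (n + 2 - j)).1
      = ∑ j ∈ Finset.Ico 1 (n + 2), SS i j * SS i (n + 2 - j) := by
    refine Finset.sum_congr rfl fun j hj => ?_
    rw [mem_Ico] at hj
    rw [prefix_S i n (by omega), prefix_S i n (by omega)]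
  rw [pre]
  simp only [lt_irrefl, if_false]
  unfold v0g v1g vm1g
  beta_reduce
  rw [hS1 1, hS1 (-1), hS2, hSpoly,
    prefix_T i n (show n + 2 - 1 ≤ n + 1 by omega),
    prefix_T i n (show n + 2 - 2 ≤ n + 1 by omega),
    prefix_T i n (show n ≤ n + 1 by omega),
    prefix_S i n (show 0 ≤ n + 1 by omega)]

lemma SS_add_two (i : k) (n : ℕ) :
    SS i (n + 2) = interp (v0g i (SS i) (TT i) (n + 2)) (v1g (SS i) (TT i) (n + 2))
      (vm1g i (SS i) (TT i) (n + 2)) :=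
  congrArg Prod.fst (pre_unfold i n)

lemma TT_add_two (i : k) (n : ℕ) :
    TT i (n + 2) =
      (2 * SS i 0 * SS i (n + 2) +
        (∑ j ∈ Finset.Ico 1 (n + 2), SS i j * SS i (n + 2 - j)) + TT i n) /ₘ cpol k := by
  have := congrArg Prod.snd (pre_unfold i n)
  rw [← SS_add_two] at this
  exact this

lemma eval_interp_zero (v0 v1 vm1 : k) : eval 0 (interp v0 v1 vm1) = v0 := by
  simp [interp]

lemma eval_interp_one (h2 : (2 : k) ≠ 0) (v0 v1 vm1 : k) :
    eval 1 (interp v0 v1 vm1) = v1 := by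
  simp only [interp, eval_add, eval_mul, eval_pow, eval_C, eval_X, one_pow, mul_one]
  field_simp
  ring_nf

lemma eval_interp_negone (h2 : (2 : k) ≠ 0) (v0 v1 vm1 : k) :
    eval (-1) (interp v0 v1 vm1) = vm1 := by
  simp only [interp, eval_add, eval_mul, eval_pow, eval_C, eval_X]
  field_simp
  ring_nf

lemma eval0_SS0 (i : k) : eval 0 (SS i 0) = 0 := by simp [SS_zero]

lemma eval1_SS0 (i : k) (h2 : (2 : k) ≠ 0) : eval 1 (SS i 0) = 1 := by
  simp only [SS_zero, eval_add, eval_mul, eval_pow, eval_C, eval_X, one_pow, mul_one]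
  field_simp
  norm_num

lemma evalm1_SS0 (i : k) (h2 : (2 : k) ≠ 0) : eval (-1) (SS i 0) = i := by
  simp only [SS_zero, eval_add, eval_mul, eval_pow, eval_C, eval_X]
  field_simp
  ring

lemma eval0_SS1 (i : k) : eval 0 (SS i 1) = i := by simp [SS_one]

lemma eval0_TT0 (i : k) : eval 0 (TT i 0) = 1 := by simp [TT_zero]

lemma cpol_monic : (cpol k).Monic := by
  unfold cpol
  exact Polynomial.monic_X_pow_sub (by rw [Polynomial.degree_X]; norm_num)

lemma cpol_dvd (h2 : (2 : k) ≠ 0) {p : k[X]} (e0 : eval 0 p = 0) (e1 : eval 1 p = 0)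
    (em1 : eval (-1) p = 0) : cpol k ∣ p := by
  have d0 : (X - C (0 : k)) ∣ p := dvd_iff_isRoot.2 e0
  have d1 : (X - C (1 : k)) ∣ p := dvd_iff_isRoot.2 e1
  have dm1 : (X - C (-1 : k)) ∣ p := dvd_iff_isRoot.2 em1
  have c01 : IsCoprime (X - C (0 : k)) (X - C (1 : k)) :=
    isCoprime_X_sub_C_of_isUnit_sub (by norm_num)
  have c0m1 : IsCoprime (X - C (0 : k)) (X - C (-1 : k)) :=
    isCoprime_X_sub_C_of_isUnit_sub (by norm_num)
  have c1m1 : IsCoprime (X - C (1 : k)) (X - C (-1 : k)) :=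
    isCoprime_X_sub_C_of_isUnit_sub (by
      rw [sub_neg_eq_add]
      rw [one_add_one_eq_two]
      exact isUnit_iff_ne_zero.2 h2)
  have hdvd : (X - C (0 : k)) * ((X - C (1 : k)) * (X - C (-1 : k))) ∣ p :=
    (c01.mul_right c0m1).mul_dvd d0 (c1m1.mul_dvd d1 dm1)
  have hc : cpol k = (X - C (0 : k)) * ((X - C (1 : k)) * (X - C (-1 : k))) := by
    unfold cpol
    rw [map_zero, map_one, map_neg, map_one]
    ring
  rw [hc]
  exact hdvd

lemma key0 (i : k) [Infinite k] (hi : i * i = -1) (h2 : (2 : k) ≠ 0) :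
    cpol k * TT i 0 = SS i 0 * SS i 0 - X := by
  apply Polynomial.funext
  intro x
  simp only [cpol, SS_zero, TT_zero, eval_mul, eval_add, eval_sub, eval_pow, eval_C, eval_X,
    eval_one]
  field_simp
  linear_combination (2 * x ^ 3 - 2 * x ^ 2) * hi

lemma key1 (i : k) [Infinite k] (hi : i * i = -1) (h2 : (2 : k) ≠ 0) :
    cpol k * TT i 1 = SS i 0 * SS i 1 + SS i 1 * SS i 0 := by
  apply Polynomial.funext
  intro x
  simp only [cpol, SS_zero, SS_one, TT_one, eval_mul, eval_add, eval_sub, eval_pow, eval_C,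
    eval_X, eval_one]
  field_simp
  ring_nf

lemma key2 (i : k) (hi : i * i = -1) (h2 : (2 : k) ≠ 0) (n : ℕ) :
    cpol k * TT i (n + 2)
      = (∑ p ∈ Finset.HasAntidiagonal.antidiagonal (n + 2), SS i p.1 * SS i p.2) + TT i n := by
  have hi0 : i ≠ 0 := by
    intro h
    rw [h, mul_zero, zero_eq_neg] at hi
    exact one_ne_zero hi
  have h2i : (2 : k) * i ≠ 0 := mul_ne_zero h2 hi0
  set Q := 2 * SS i 0 * SS i (n + 2) +
      (∑ j ∈ Finset.Ico 1 (n + 2), SS i j * SS i (n + 2 - j)) + TT i n with hQ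
  have hdvd : cpol k ∣ Q := by
    apply cpol_dvd h2
    · -- eval at 0
      have e0 : eval 0 Q = (∑ j ∈ Finset.Ico 1 (n + 2),
          eval 0 (SS i j) * eval 0 (SS i (n + 2 - j))) + eval 0 (TT i n) := by
        simp [hQ, eval_finset_sum, eval0_SS0]
      rw [e0]
      cases n with
      | zero =>
          have hone : Finset.Ico 1 (0 + 2) = {1} := rfl
          rw [hone, Finset.sum_singleton]
          have h21 : (0 + 2 - 1 : ℕ) = 1 := rfl
          rw [h21, eval0_SS1, eval0_TT0]
          linear_combination hi
      | succ m =>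
          have hsplit : (∑ j ∈ Finset.Ico 1 (m + 1 + 2),
              eval 0 (SS i j) * eval 0 (SS i (m + 1 + 2 - j)))
              = eval 0 (SS i 1) * eval 0 (SS i (m + 2)) +
                ((∑ j ∈ Finset.Ico 2 (m + 2),
                  eval 0 (SS i j) * eval 0 (SS i (m + 2 + 1 - j))) +
                  eval 0 (SS i (m + 2)) * eval 0 (SS i 1)) := by
            rw [Finset.sum_eq_sum_Ico_succ_bot (by omega : 1 < m + 1 + 2)]
            rw [show m + 1 + 2 = m + 2 + 1 by omega]
            rw [Finset.sum_Ico_succ_top (by omega : 2 ≤ m + 2)]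
            simp only [show m + 2 + 1 - 1 = m + 2 from by omega,
              show m + 2 + 1 - (m + 2) = 1 from by omega]
          rw [hsplit, eval0_SS1, SS_add_two i m, eval_interp_zero]
          unfold v0g
          simp only [show m + 2 - 1 = m + 1 from rfl]
          field_simp
          ring
    · -- eval at 1
      have e1 : eval 1 Q = 2 * eval 1 (SS i 0) * eval 1 (SS i (n + 2)) +
          (∑ j ∈ Finset.Ico 1 (n + 2), eval 1 (SS i j) * eval 1 (SS i (n + 2 - j))) +
          eval 1 (TT i n) := by
        simp [hQ, eval_finset_sum]
      rw [e1, eval1_SS0 i h2, SS_add_two, eval_interp_one h2]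
      unfold v1g
      simp only [Nat.add_sub_cancel]
      field_simp
      ring
    · -- eval at -1
      have em1 : eval (-1) Q = 2 * eval (-1) (SS i 0) * eval (-1) (SS i (n + 2)) +
          (∑ j ∈ Finset.Ico 1 (n + 2), eval (-1) (SS i j) * eval (-1) (SS i (n + 2 - j))) +
          eval (-1) (TT i n) := by
        simp [hQ, eval_finset_sum]
      rw [em1, evalm1_SS0 i h2, SS_add_two, eval_interp_negone h2]
      unfold vm1g
      simp only [Nat.add_sub_cancel]
      field_simp
      ring
  have hTT : cpol k * TT i (n + 2) = Q := by
    rw [TT_add_two, ← hQ]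
    conv_rhs => rw [← Polynomial.modByMonic_add_div Q (q := cpol k)]
    rw [(Polynomial.modByMonic_eq_zero_iff_dvd cpol_monic).2 hdvd, zero_add]
  rw [hTT, hQ]
  rw [Finset.Nat.sum_antidiagonal_eq_sum_range_succ (fun a b => SS i a * SS i b)]
  rw [Finset.sum_range_succ, Finset.range_eq_Ico,
    Finset.sum_eq_sum_Ico_succ_bot (by omega : 0 < n + 2)]
  simp only [Nat.sub_zero, Nat.sub_self]
  ring

end EllAux

open PowerSeries

theorem x_square_mod_elliptic_in_kx_y
    (k : Type*) [Field k] [IsAlgClosed k] (h2 : (2 : k) ≠ 0) :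
    ∃ s t : PowerSeries (Polynomial k),
      (PowerSeries.C : Polynomial k →+* PowerSeries (Polynomial k)) Polynomial.X - s ^ 2
        = ((PowerSeries.X : PowerSeries (Polynomial k)) ^ 2
            - (PowerSeries.C : Polynomial k →+* PowerSeries (Polynomial k))
                (Polynomial.X * (Polynomial.X ^ 2 - 1))) * t := by
  obtain ⟨i, hi2⟩ := IsAlgClosed.exists_pow_nat_eq (-1 : k) zero_lt_two
  have hi : i * i = -1 := by rw [← sq]; exact hi2
  refine ⟨PowerSeries.mk (fun n => EllAux.SS i n),
    PowerSeries.mk (fun n => EllAux.TT i n), ?_⟩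
  have hcpol : Polynomial.X * (Polynomial.X ^ 2 - 1) = EllAux.cpol k := by
    unfold EllAux.cpol; ring
  rw [hcpol]
  refine PowerSeries.ext fun n => ?_
  rw [map_sub, sub_mul, map_sub, pow_two, PowerSeries.coeff_mul,
    PowerSeries.coeff_C_mul, PowerSeries.coeff_X_pow_mul', PowerSeries.coeff_C]
  simp only [PowerSeries.coeff_mk]
  match n with
  | 0 =>
      rw [if_pos rfl, if_neg (by omega)]
      rw [Finset.Nat.antidiagonal_zero, Finset.sum_singleton]
      linear_combination EllAux.key0 i hi h2
  | 1 =>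
      rw [if_neg (by omega), if_neg (by omega)]
      rw [Finset.Nat.sum_antidiagonal_eq_sum_range_succ
        (fun a b => EllAux.SS i a * EllAux.SS i b),
        Finset.sum_range_succ, Finset.sum_range_one]
      simp only [Nat.sub_zero, Nat.sub_self]
      linear_combination EllAux.key1 i hi h2
  | (n + 2) =>
      rw [if_neg (by omega), if_pos (by omega)]
      have : (n + 2 - 2 : ℕ) = n := rfl
      rw [this]
      linear_combination EllAux.key2 i hi h2 n
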